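/- arXiv:2306.10132 — 4 statements merged into one kernel-verified Lean document; each statement's English description precedes it below -/
import Mathlib

section
/- If the cycle C_3 has exactly one negative edge and C_n (n ≥ 3) has exactly one negative edge, then the balancing dimension of the Cartesian product C_3⁻ □ C_n⁻ equals 3. -/
open Finset
open scoped Classical

/-- A signed graph: a simple graph together with a ±1 sign on each edge. -/
structure SGraph (V : Type*) where
  G : SimpleGraph V
  sign : V → V → ℤ
  sign_symm : ∀ u v, sign u v = sign v u
  sign_mem : ∀ u v, G.Adj u v → sign u v = 1 ∨ sign u v = -1

variable {V V1 V2 W : Type*}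

/-- `ζ` is a positive k-switching function for the signed graph `S`. -/
def IsPosSwitching [Fintype V] (S : SGraph V) (k : ℕ) (ζ : V → Fin k → ℤ) : Prop :=
  (∀ v i, ζ v i = -1 ∨ ζ v i = 0 ∨ ζ v i = 1) ∧
  (∀ u v, S.G.Adj u v → (∑ i, ζ u i * ζ v i) ≠ 0) ∧
  (∀ u v, S.G.Adj u v → S.sign u v * Int.sign (∑ i, ζ u i * ζ v i) = 1)

def HasPosSwitching [Fintype V] (S : SGraph V) (k : ℕ) : Prop :=
  ∃ ζ : V → Fin k → ℤ, IsPosSwitching S k ζ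

/-- The balancing dimension: least `k ≥ 1` admitting a positive k-switching function. -/
noncomputable def bdim [Fintype V] (S : SGraph V) : ℕ :=
  sInf {k | 1 ≤ k ∧ HasPosSwitching S k}

/-- A signed graph is balanced iff it can be switched to all-positive by a 1-switching. -/
def SGraph.Balanced [Fintype V] (S : SGraph V) : Prop := HasPosSwitching S 1

/-- The negation of a signed graph. -/
def SGraph.neg (S : SGraph V) : SGraph V where
  G := S.G
  sign := fun u v => - S.sign u v
  sign_symm := fun u v => by (try dsimp only); rw [S.sign_symm]
  sign_mem := fun u v h => by rcases S.sign_mem u v h with h1 | h1 <;> simp [h1]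

def SGraph.Antibalanced [Fintype V] (S : SGraph V) : Prop := S.neg.Balanced

/-- Switching equivalence of signed graphs. -/
def SwitchEquiv (S1 S2 : SGraph V) : Prop :=
  S1.G = S2.G ∧ ∃ η : V → ℤ, (∀ v, η v = 1 ∨ η v = -1) ∧
    ∀ u v, S1.G.Adj u v → S2.sign u v = η u * S1.sign u v * η v

/-- The Cartesian product of signed graphs. -/
noncomputable def cartProd (S1 : SGraph V1) (S2 : SGraph V2) : SGraph (V1 × V2) where
  G := S1.G □ S2.G
  sign := fun p q => if p.2 = q.2 then S1.sign p.1 q.1 else S2.sign p.2 q.2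
  sign_symm := by
    intro u v
    (try dsimp only)
    rcases eq_or_ne u.2 v.2 with h | h
    · rw [if_pos h, if_pos h.symm, S1.sign_symm]
    · rw [if_neg h, if_neg (Ne.symm h), S2.sign_symm]
  sign_mem := by
    intro u v h
    (try dsimp only)
    rcases (SimpleGraph.boxProd_adj.mp h) with ⟨h1, h2⟩ | ⟨h1, h2⟩
    · rw [if_pos h2]; exact S1.sign_mem _ _ h1
    · rw [if_neg h1.ne]; exact S2.sign_mem _ _ h1
/-- The HG-lexicographic product of signed graphs. -/
noncomputable def lexHG (S1 : SGraph V1) (S2 : SGraph V2) : SGraph (V1 × V2) where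
  G := { Adj := fun p q => S1.G.Adj p.1 q.1 ∨ (p.1 = q.1 ∧ S2.G.Adj p.2 q.2)
         symm := by
           constructor
           rintro p q (h | ⟨h1, h2⟩)
           · exact Or.inl h.symm
           · exact Or.inr ⟨h1.symm, h2.symm⟩
         loopless := by
           constructor
           rintro p (h | ⟨_, h⟩)
           · exact S1.G.irrefl h
           · exact S2.G.irrefl h }
  sign := fun p q => if p.1 = q.1 then S2.sign p.2 q.2 else S1.sign p.1 q.1
  sign_symm := by
    intro u v
    (try dsimp only)
    rcases eq_or_ne u.1 v.1 with h | h
    · rw [if_pos h, if_pos h.symm, S2.sign_symm]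
    · rw [if_neg h, if_neg (Ne.symm h), S1.sign_symm]
  sign_mem := by
    rintro p q (h | ⟨h1, h2⟩)
    · (try dsimp only); rw [if_neg h.ne]; exact S1.sign_mem _ _ h
    · (try dsimp only); rw [if_pos h1]; exact S2.sign_mem _ _ h2

/-- The BCD-lexicographic product of signed graphs. -/
noncomputable def lexBCD (S1 : SGraph V1) (S2 : SGraph V2) : SGraph (V1 × V2) where
  G := { Adj := fun p q => S1.G.Adj p.1 q.1 ∨ (p.1 = q.1 ∧ S2.G.Adj p.2 q.2)
         symm := by
           constructor
           rintro p q (h | ⟨h1, h2⟩)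
           · exact Or.inl h.symm
           · exact Or.inr ⟨h1.symm, h2.symm⟩
         loopless := by
           constructor
           rintro p (h | ⟨_, h⟩)
           · exact S1.G.irrefl h
           · exact S2.G.irrefl h }
  sign := fun p q =>
    if S2.G.Adj p.2 q.2 then
      (if S1.G.Adj p.1 q.1 then S1.sign p.1 q.1 * S2.sign p.2 q.2 else S2.sign p.2 q.2)
    else S1.sign p.1 q.1
  sign_symm := by
    intro u v
    (try dsimp only)
    rw [S1.G.adj_comm v.1 u.1, S2.G.adj_comm v.2 u.2, S1.sign_symm v.1 u.1,
      S2.sign_symm v.2 u.2]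
  sign_mem := by
    rintro p q (h | ⟨h1, h2⟩) <;> (try dsimp only)
    · by_cases h2 : S2.G.Adj p.2 q.2
      · rw [if_pos h2, if_pos h]
        rcases S1.sign_mem _ _ h with e1 | e1 <;> rcases S2.sign_mem _ _ h2 with e2 | e2 <;>
          simp [e1, e2]
      · rw [if_neg h2]; exact S1.sign_mem _ _ h
    · rw [if_pos h2, if_neg (h1 ▸ S1.G.irrefl)]
      exact S2.sign_mem _ _ h2

/-- The tensor product of signed graphs. -/
def tensorProd (S1 : SGraph V1) (S2 : SGraph V2) : SGraph (V1 × V2) where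
  G := { Adj := fun p q => S1.G.Adj p.1 q.1 ∧ S2.G.Adj p.2 q.2
         symm := ⟨fun p q ⟨h1, h2⟩ => ⟨h1.symm, h2.symm⟩⟩
         loopless := ⟨fun p ⟨h1, _⟩ => S1.G.irrefl h1⟩ }
  sign := fun p q => S1.sign p.1 q.1 * S2.sign p.2 q.2
  sign_symm := by
    intro u v
    (try dsimp only)
    rw [S1.sign_symm, S2.sign_symm]
  sign_mem := by
    rintro p q ⟨h1, h2⟩
    (try dsimp only)
    rcases S1.sign_mem _ _ h1 with e1 | e1 <;> rcases S2.sign_mem _ _ h2 with e2 | e2 <;>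
      simp [e1, e2]

/-- The strong product of signed graphs. -/
noncomputable def strongProd (S1 : SGraph V1) (S2 : SGraph V2) : SGraph (V1 × V2) where
  G := { Adj := fun p q => (S1.G.Adj p.1 q.1 ∧ p.2 = q.2) ∨ (p.1 = q.1 ∧ S2.G.Adj p.2 q.2) ∨
           (S1.G.Adj p.1 q.1 ∧ S2.G.Adj p.2 q.2)
         symm := by
           constructor
           rintro p q (⟨h1, h2⟩ | ⟨h1, h2⟩ | ⟨h1, h2⟩)
           · exact Or.inl ⟨h1.symm, h2.symm⟩
           · exact Or.inr (Or.inl ⟨h1.symm, h2.symm⟩)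
           · exact Or.inr (Or.inr ⟨h1.symm, h2.symm⟩)
         loopless := by
           constructor
           rintro p (⟨h1, _⟩ | ⟨_, h2⟩ | ⟨h1, _⟩)
           · exact S1.G.irrefl h1
           · exact S2.G.irrefl h2
           · exact S1.G.irrefl h1 }
  sign := fun p q =>
    if p.1 = q.1 then S2.sign p.2 q.2
    else if p.2 = q.2 then S1.sign p.1 q.1
    else S1.sign p.1 q.1 * S2.sign p.2 q.2
  sign_symm := by
    intro u v
    (try dsimp only)
    rcases eq_or_ne u.1 v.1 with h | h
    · rw [if_pos h, if_pos h.symm, S2.sign_symm]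
    · rw [if_neg h, if_neg (Ne.symm h)]
      rcases eq_or_ne u.2 v.2 with h' | h'
      · rw [if_pos h', if_pos h'.symm, S1.sign_symm]
      · rw [if_neg h', if_neg (Ne.symm h'), S1.sign_symm, S2.sign_symm]
  sign_mem := by
    rintro p q (⟨h1, h2⟩ | ⟨h1, h2⟩ | ⟨h1, h2⟩) <;> (try dsimp only)
    · rw [if_neg h1.ne, if_pos h2]; exact S1.sign_mem _ _ h1
    · rw [if_pos h1]; exact S2.sign_mem _ _ h2
    · rw [if_neg h1.ne, if_neg h2.ne]
      rcases S1.sign_mem _ _ h1 with e1 | e1 <;> rcases S2.sign_mem _ _ h2 with e2 | e2 <;>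
        simp [e1, e2]
/-- The cycle on `ZMod n` (vertices `0,1,…,n-1`) with the single negative edge `{0,1}`. -/
noncomputable def Cneg (n : ℕ) : SGraph (ZMod n) where
  G := { Adj := fun i j => i ≠ j ∧ (i - j = 1 ∨ j - i = 1)
         symm := ⟨fun i j ⟨h1, h2⟩ => ⟨h1.symm, h2.symm⟩⟩
         loopless := ⟨fun i ⟨h1, _⟩ => h1 rfl⟩ }
  sign := fun i j => if (i = 0 ∧ j = 1) ∨ (i = 1 ∧ j = 0) then -1 else 1
  sign_symm := by
    intro u v
    (try dsimp only)
    exact if_congr (by tauto) rfl rfl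
  sign_mem := by
    intro u v _
    (try dsimp only)
    by_cases h : (u = 0 ∧ v = 1) ∨ (u = 1 ∧ v = 0)
    · rw [if_pos h]; exact Or.inr rfl
    · rw [if_neg h]; exact Or.inl rfl

/-- The all-negative complete signed graph on `n` vertices. -/
def Kneg (n : ℕ) : SGraph (Fin n) where
  G := ⊤
  sign := fun _ _ => -1
  sign_symm := fun _ _ => rfl
  sign_mem := fun _ _ _ => Or.inr rfl

/-- The edgeless signed graph on `k` vertices. -/
def Nk (k : ℕ) : SGraph (Fin k) where
  G := ⊥
  sign := fun _ _ => 1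
  sign_symm := fun _ _ => rfl
  sign_mem := fun _ _ h => (h.elim)

/-- The lexicographic product of simple graphs. -/
def lexProdGraph (G : SimpleGraph V1) (H : SimpleGraph V2) : SimpleGraph (V1 × V2) where
  Adj p q := G.Adj p.1 q.1 ∨ (p.1 = q.1 ∧ H.Adj p.2 q.2)
  symm := by
    constructor
    rintro p q (h | ⟨h1, h2⟩)
    · exact Or.inl h.symm
    · exact Or.inr ⟨h1.symm, h2.symm⟩
  loopless := by
    constructor
    rintro p (h | ⟨_, h⟩)
    · exact G.irrefl h
    · exact H.irrefl h



/-! ### Auxiliary material for `stmt4` -/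

private def vA : ZMod 3 → Fin 3 → ℤ := ![![-1,-1,-1], ![-1,1,1], ![-1,-1,1]]
private def vB : ZMod 3 → Fin 3 → ℤ := ![![-1,1,1], ![-1,-1,-1], ![-1,1,-1]]
private def vP : ZMod 3 → Fin 3 → ℤ := ![![-1,-1,1], ![-1,1,-1], ![-1,-1,-1]]

private lemma vA_mem : ∀ i t, vA i t = -1 ∨ vA i t = 0 ∨ vA i t = 1 := by decide
private lemma vB_mem : ∀ i t, vB i t = -1 ∨ vB i t = 0 ∨ vB i t = 1 := by decide
private lemma vP_mem : ∀ i t, vP i t = -1 ∨ vP i t = 0 ∨ vP i t = 1 := by decide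

private lemma dot_AB : ∀ i : ZMod 3, (∑ t, vA i t * vB i t) = -1 := by decide
private lemma dot_BP : ∀ i : ZMod 3, (∑ t, vB i t * vP i t) = 1 := by decide
private lemma dot_PP : ∀ i : ZMod 3, (∑ t, vP i t * vP i t) = 3 := by decide
private lemma dot_PA : ∀ i : ZMod 3, (∑ t, vP i t * vA i t) = 1 := by decide

private lemma sign3_eq : ∀ a b : ZMod 3,
    (Cneg 3).sign a b = if (a = 0 ∧ b = 1) ∨ (a = 1 ∧ b = 0) then -1 else 1 :=
  fun _ _ => rfl

private lemma signN_eq {n : ℕ} : ∀ a b : ZMod n,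
    (Cneg n).sign a b = if (a = 0 ∧ b = 1) ∨ (a = 1 ∧ b = 0) then -1 else 1 :=
  fun _ _ => rfl

private lemma cart_sign_eq {n : ℕ} (i i' : ZMod 3) (j : ZMod n) :
    (cartProd (Cneg 3) (Cneg n)).sign (i, j) (i', j) = (Cneg 3).sign i i' :=
  if_pos rfl

private lemma cart_sign_ne {n : ℕ} (i i' : ZMod 3) {j j' : ZMod n} (h : j ≠ j') :
    (cartProd (Cneg 3) (Cneg n)).sign (i, j) (i', j') = (Cneg n).sign j j' :=
  if_neg h

private lemma horiz_key (f : ZMod 3 → Fin 3 → ℤ) (hf : f = vA ∨ f = vB ∨ f = vP) :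
    ∀ i i' : ZMod 3, (Cneg 3).G.Adj i i' →
      (∑ t, f i t * f i' t) ≠ 0 ∧
      (Cneg 3).sign i i' * Int.sign (∑ t, f i t * f i' t) = 1 := by
  have hz : ∀ x : ZMod 3, x = 0 ∨ x = 1 ∨ x = 2 := by decide
  intro i i' hadj
  have hne : i ≠ i' := hadj.1
  rw [sign3_eq]
  rcases hf with rfl | rfl | rfl <;>
    rcases hz i with rfl | rfl | rfl <;> rcases hz i' with rfl | rfl | rfl <;>
      first
        | exact absurd rfl hne
        | (rw [if_pos (by decide)]; exact ⟨by decide, by decide⟩)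
        | (rw [if_neg (by decide)]; exact ⟨by decide, by decide⟩)

private lemma no_tri1 : ∀ a b c : ℤ,
    (a = -1 ∨ a = 0 ∨ a = 1) → (b = -1 ∨ b = 0 ∨ b = 1) → (c = -1 ∨ c = 0 ∨ c = 1) →
    a * b < 0 → 0 < b * c → 0 < c * a → False := by
  intro a b c ha hb hc
  rcases ha with rfl | rfl | rfl <;> rcases hb with rfl | rfl | rfl <;>
    rcases hc with rfl | rfl | rfl <;> omega

private lemma no_tri2 : ∀ a0 a1 b0 b1 c0 c1 : ℤ,
    (a0 = -1 ∨ a0 = 0 ∨ a0 = 1) → (a1 = -1 ∨ a1 = 0 ∨ a1 = 1) →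
    (b0 = -1 ∨ b0 = 0 ∨ b0 = 1) → (b1 = -1 ∨ b1 = 0 ∨ b1 = 1) →
    (c0 = -1 ∨ c0 = 0 ∨ c0 = 1) → (c1 = -1 ∨ c1 = 0 ∨ c1 = 1) →
    a0 * b0 + a1 * b1 < 0 → 0 < b0 * c0 + b1 * c1 → 0 < c0 * a0 + c1 * a1 → False := by
  intro a0 a1 b0 b1 c0 c1 h1 h2 h3 h4 h5 h6
  rcases h1 with rfl | rfl | rfl <;> rcases h2 with rfl | rfl | rfl <;>
    rcases h3 with rfl | rfl | rfl <;> rcases h4 with rfl | rfl | rfl <;>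
    rcases h5 with rfl | rfl | rfl <;> rcases h6 with rfl | rfl | rfl <;> omega

private lemma tri_neg {k n : ℕ} [NeZero n] {ζ : ZMod 3 × ZMod n → Fin k → ℤ}
    (h : IsPosSwitching (cartProd (Cneg 3) (Cneg n)) k ζ) :
    (∑ i, ζ (0,0) i * ζ (1,0) i) < 0 ∧ 0 < (∑ i, ζ (1,0) i * ζ (2,0) i) ∧
      0 < (∑ i, ζ (2,0) i * ζ (0,0) i) := by
  obtain ⟨_, _, h3⟩ := h
  have a01 : (Cneg 3).G.Adj 0 1 := ⟨by decide, by decide⟩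
  have a12 : (Cneg 3).G.Adj 1 2 := ⟨by decide, by decide⟩
  have a20 : (Cneg 3).G.Adj 2 0 := ⟨by decide, by decide⟩
  have adj01 : (cartProd (Cneg 3) (Cneg n)).G.Adj (0,0) (1,0) :=
    SimpleGraph.boxProd_adj.mpr (Or.inl ⟨a01, rfl⟩)
  have adj12 : (cartProd (Cneg 3) (Cneg n)).G.Adj (1,0) (2,0) :=
    SimpleGraph.boxProd_adj.mpr (Or.inl ⟨a12, rfl⟩)
  have adj20 : (cartProd (Cneg 3) (Cneg n)).G.Adj (2,0) (0,0) :=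
    SimpleGraph.boxProd_adj.mpr (Or.inl ⟨a20, rfl⟩)
  have e01 := h3 _ _ adj01
  have e12 := h3 _ _ adj12
  have e20 := h3 _ _ adj20
  rw [cart_sign_eq, sign3_eq, if_pos (by decide)] at e01
  rw [cart_sign_eq, sign3_eq, if_neg (by decide)] at e12
  rw [cart_sign_eq, sign3_eq, if_neg (by decide)] at e20
  refine ⟨Int.sign_eq_neg_one_iff_neg.mp (by linarith),
    Int.sign_eq_one_iff_pos.mp (by linarith),
    Int.sign_eq_one_iff_pos.mp (by linarith)⟩

private lemma vert_key {n : ℕ} [NeZero n] (hn : 3 ≤ n) (j : ZMod n) (i : ZMod 3) :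
    (∑ t, (if j.val = 0 then vA else if j.val = 1 then vB else vP) i t *
          (if (j+1).val = 0 then vA else if (j+1).val = 1 then vB else vP) i t) ≠ 0 ∧
    (Cneg n).sign j (j+1) * Int.sign
      (∑ t, (if j.val = 0 then vA else if j.val = 1 then vB else vP) i t *
            (if (j+1).val = 0 then vA else if (j+1).val = 1 then vB else vP) i t) = 1 := by
  haveI : Fact (1 < n) := ⟨by omega⟩
  have hjlt : j.val < n := ZMod.val_lt j
  have hval : (j+1).val = (j.val + 1) % n := by
    rw [ZMod.val_add, ZMod.val_one]
  by_cases h0 : j.val = 0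
  · -- column A to column B
    have hj0 : j = 0 := (ZMod.val_eq_zero j).mp h0
    have h1v : (j+1).val = 1 := by
      rw [hval, h0, Nat.mod_eq_of_lt (by omega)]
    rw [if_pos h0, if_neg (by omega : ¬ (j+1).val = 0), if_pos h1v, dot_AB i,
      signN_eq, if_pos (Or.inl ⟨hj0, by rw [hj0, zero_add]⟩)]
    exact ⟨by decide, by decide⟩
  · have hjne0 : j ≠ 0 := fun h => h0 ((ZMod.val_eq_zero j).mpr h)
    by_cases h1 : j.val = 1
    · -- column B to column P
      have h2v : (j+1).val = 2 := by
        rw [hval, h1, Nat.mod_eq_of_lt (by omega)]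
      have hne01 : (j+1) ≠ 0 := fun h => by
        rw [h, ZMod.val_zero] at h2v; exact absurd h2v (by omega)
      rw [if_neg h0, if_pos h1, if_neg (by omega : ¬ (j+1).val = 0),
        if_neg (by omega : ¬ (j+1).val = 1), dot_BP i, signN_eq]
      rw [if_neg (by
        rintro (⟨hj0', _⟩ | ⟨_, hj10⟩)
        · exact hjne0 hj0'
        · exact hne01 hj10)]
      exact ⟨by decide, by decide⟩
    · have hjne1 : j ≠ 1 := fun h => h1 (by rw [h, ZMod.val_one])
      have hsgn : ¬ ((j = 0 ∧ j + 1 = 1) ∨ (j = 1 ∧ j + 1 = 0)) := by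
        rintro (⟨hj0', _⟩ | ⟨hj1', _⟩)
        · exact hjne0 hj0'
        · exact hjne1 hj1'
      by_cases hlast : j.val = n - 1
      · -- column P to column A
        have h0v : (j+1).val = 0 := by
          rw [hval, hlast, (by omega : n - 1 + 1 = n), Nat.mod_self]
        rw [if_neg h0, if_neg h1, if_pos h0v, dot_PA i, signN_eq, if_neg hsgn]
        exact ⟨by decide, by decide⟩
      · -- column P to column P
        have hmv : (j+1).val = j.val + 1 := by
          rw [hval, Nat.mod_eq_of_lt (by omega)]
        rw [if_neg h0, if_neg h1, if_neg (by omega : ¬ (j+1).val = 0),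
          if_neg (by omega : ¬ (j+1).val = 1), dot_PP i, signN_eq, if_neg hsgn]
        exact ⟨by decide, by decide⟩

private lemma upper_bound {n : ℕ} [NeZero n] (hn : 3 ≤ n) :
    HasPosSwitching (cartProd (Cneg 3) (Cneg n)) 3 := by
  refine ⟨fun p => (if p.2.val = 0 then vA else if p.2.val = 1 then vB else vP) p.1, ?_, ?_, ?_⟩
  · intro v t
    dsimp only
    split_ifs
    · exact vA_mem v.1 t
    · exact vB_mem v.1 t
    · exact vP_mem v.1 t
  · rintro ⟨i, j⟩ ⟨i', j'⟩ hadj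
    rcases SimpleGraph.boxProd_adj.mp hadj with ⟨hij, hjj⟩ | ⟨hjj, hii⟩
    · dsimp only at hjj ⊢
      subst hjj
      exact (horiz_key _ (by split_ifs <;> simp) i i' hij).1
    · dsimp only at hii ⊢
      subst hii
      rcases hjj.2 with h | h
      · -- j = j' + 1
        have hj : j = j' + 1 := by rw [← h]; ring
        subst hj
        have := (vert_key hn j' i).1
        simpa [mul_comm] using this
      · -- j' = j + 1
        have hj : j' = j + 1 := by rw [← h]; ring
        subst hj
        exact (vert_key hn j i).1
  · rintro ⟨i, j⟩ ⟨i', j'⟩ hadj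
    rcases SimpleGraph.boxProd_adj.mp hadj with ⟨hij, hjj⟩ | ⟨hjj, hii⟩
    · dsimp only at hjj ⊢
      subst hjj
      rw [cart_sign_eq]
      exact (horiz_key _ (by split_ifs <;> simp) i i' hij).2
    · dsimp only at hii ⊢
      subst hii
      rw [cart_sign_ne _ _ hjj.1]
      rcases hjj.2 with h | h
      · have hj : j = j' + 1 := by rw [← h]; ring
        subst hj
        have := (vert_key hn j' i).2
        rw [(Cneg n).sign_symm]
        simpa [mul_comm] using this
      · have hj : j' = j + 1 := by rw [← h]; ring
        subst hj
        exact (vert_key hn j i).2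

theorem stmt4 (n : ℕ) [NeZero n] (hn : 3 ≤ n) :
    bdim (cartProd (Cneg 3) (Cneg n)) = 3 := by
  have h3 : HasPosSwitching (cartProd (Cneg 3) (Cneg n)) 3 := upper_bound hn
  have hmem : 3 ∈ {k | 1 ≤ k ∧ HasPosSwitching (cartProd (Cneg 3) (Cneg n)) k} :=
    ⟨by norm_num, h3⟩
  refine le_antisymm (Nat.sInf_le hmem) (le_csInf ⟨3, hmem⟩ ?_)
  rintro k ⟨hk1, ζ, hmemb, hnz, hsg⟩
  by_contra hlt
  push_neg at hlt
  interval_cases k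
  · obtain ⟨t1, t2, t3⟩ := tri_neg (n := n) ⟨hmemb, hnz, hsg⟩
    rw [Fin.sum_univ_one] at t1 t2 t3
    exact no_tri1 _ _ _ (hmemb (0,0) 0) (hmemb (1,0) 0) (hmemb (2,0) 0) t1 t2 t3
  · obtain ⟨t1, t2, t3⟩ := tri_neg (n := n) ⟨hmemb, hnz, hsg⟩
    rw [Fin.sum_univ_two] at t1 t2 t3
    exact no_tri2 _ _ _ _ _ _ (hmemb (0,0) 0) (hmemb (0,0) 1) (hmemb (1,0) 0)
      (hmemb (1,0) 1) (hmemb (2,0) 0) (hmemb (2,0) 1) t1 t2 t3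
end

section
/- For any signed graph Σ and the edgeless graph N_k on k vertices, bdim(N_k[Σ]) = bdim(Σ) and bdim(Σ[N_k]) = bdim(Σ), where [·] denotes the HG-lexicographic product. -/
open Finset
open scoped Classical

variable {V V1 V2 W : Type*}

lemma lexHG_Nk_left_adj {k : ℕ} (S : SGraph V) (p q : Fin k × V) :
    (lexHG (Nk k) S).G.Adj p q ↔ p.1 = q.1 ∧ S.G.Adj p.2 q.2 := by
  show (⊥ : SimpleGraph (Fin k)).Adj p.1 q.1 ∨ _ ↔ _
  simp

lemma lexHG_Nk_right_adj {k : ℕ} (S : SGraph V) (p q : V × Fin k) :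
    (lexHG S (Nk k)).G.Adj p q ↔ S.G.Adj p.1 q.1 := by
  show _ ∨ (_ ∧ (⊥ : SimpleGraph (Fin k)).Adj p.2 q.2) ↔ _
  simp

lemma hps_left_iff [Fintype V] (S : SGraph V) (k n : ℕ) (hk : 0 < k) :
    HasPosSwitching (lexHG (Nk k) S) n ↔ HasPosSwitching S n := by
  constructor
  · rintro ⟨ζ, h1, h2, h3⟩
    refine ⟨fun v => ζ (⟨0, hk⟩, v), fun v i => h1 _ i, ?_, ?_⟩
    · intro u v h
      exact h2 (⟨0, hk⟩, u) (⟨0, hk⟩, v) ((lexHG_Nk_left_adj S _ _).mpr ⟨rfl, h⟩)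
    · intro u v h
      have := h3 (⟨0, hk⟩, u) (⟨0, hk⟩, v) ((lexHG_Nk_left_adj S _ _).mpr ⟨rfl, h⟩)
      simpa [lexHG] using this
  · rintro ⟨ζ, h1, h2, h3⟩
    refine ⟨fun p => ζ p.2, fun v i => h1 _ i, ?_, ?_⟩
    · intro u v h
      exact h2 u.2 v.2 ((lexHG_Nk_left_adj S _ _).mp h).2
    · intro u v h
      obtain ⟨he, ha⟩ := (lexHG_Nk_left_adj S _ _).mp h
      have := h3 u.2 v.2 ha
      simpa [lexHG, he] using this

lemma hps_right_iff [Fintype V] (S : SGraph V) (k n : ℕ) (hk : 0 < k) :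
    HasPosSwitching (lexHG S (Nk k)) n ↔ HasPosSwitching S n := by
  constructor
  · rintro ⟨ζ, h1, h2, h3⟩
    refine ⟨fun v => ζ (v, ⟨0, hk⟩), fun v i => h1 _ i, ?_, ?_⟩
    · intro u v h
      exact h2 (u, ⟨0, hk⟩) (v, ⟨0, hk⟩) ((lexHG_Nk_right_adj S _ _).mpr h)
    · intro u v h
      have := h3 (u, ⟨0, hk⟩) (v, ⟨0, hk⟩) ((lexHG_Nk_right_adj S _ _).mpr h)
      simpa [lexHG, h.ne] using this
  · rintro ⟨ζ, h1, h2, h3⟩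
    refine ⟨fun p => ζ p.1, fun v i => h1 _ i, ?_, ?_⟩
    · intro u v h
      exact h2 u.1 v.1 ((lexHG_Nk_right_adj S _ _).mp h)
    · intro u v h
      have ha := (lexHG_Nk_right_adj S _ _).mp h
      have := h3 u.1 v.1 ha
      simpa [lexHG, ha.ne] using this

theorem stmt9 [Fintype V] (S : SGraph V) (k : ℕ) (hk : 0 < k) :
    bdim (lexHG (Nk k) S) = bdim S ∧ bdim (lexHG S (Nk k)) = bdim S := by
  constructor
  · exact congrArg sInf (Set.ext fun n =>
      and_congr_right fun _ => hps_left_iff S k n hk)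
  · exact congrArg sInf (Set.ext fun n =>
      and_congr_right fun _ => hps_right_iff S k n hk)
end

section
/- If ζ₁ is a positive k-switching function for Σ₁ and ζ₂ a positive 1-switching function ({−1,1}-valued) for Σ₂, then ζ((u,v)) = ζ₂(v)·ζ₁(u) is a positive k-switching function for the tensor product Σ₁ × Σ₂; consequently bdim(Σ₁ × Σ₂) ≤ bdim(Σ₁) when Σ₂ is balanced. -/
open Finset
open scoped Classical

variable {V V1 V2 W : Type*}

lemma tensor_key [Fintype V1] [Fintype V2] (S1 : SGraph V1) (S2 : SGraph V2)
    (k : ℕ) (ζ1 : V1 → Fin k → ℤ) (h1 : IsPosSwitching S1 k ζ1)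
    (ζ2 : V2 → ℤ) (h2a : ∀ v, ζ2 v = 1 ∨ ζ2 v = -1)
    (h2b : ∀ u v, S2.G.Adj u v → S2.sign u v * Int.sign (ζ2 u * ζ2 v) = 1) :
    IsPosSwitching (tensorProd S1 S2) k (fun p i => ζ2 p.2 * ζ1 p.1 i) := by
  have hsum : ∀ p q : V1 × V2,
      (∑ i, (ζ2 p.2 * ζ1 p.1 i) * (ζ2 q.2 * ζ1 q.1 i))
        = (ζ2 p.2 * ζ2 q.2) * ∑ i, ζ1 p.1 i * ζ1 q.1 i := by
    intro p q
    rw [Finset.mul_sum]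
    exact Finset.sum_congr rfl fun i _ => by ring
  have hne : ∀ v, ζ2 v ≠ 0 := by
    intro v; rcases h2a v with h | h <;> simp [h]
  refine ⟨?_, ?_, ?_⟩
  · intro p i
    rcases h2a p.2 with h | h <;> rcases h1.1 p.1 i with h' | h' | h' <;> simp [h, h']
  · rintro p q ⟨ha1, ha2⟩
    rw [hsum]
    exact mul_ne_zero (mul_ne_zero (hne _) (hne _)) (h1.2.1 _ _ ha1)
  · rintro p q ⟨ha1, ha2⟩
    rw [hsum, Int.sign_mul]
    have e1 := h1.2.2 _ _ ha1
    have e2 := h2b _ _ ha2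
    show (S1.sign p.1 q.1 * S2.sign p.2 q.2) * _ = 1
    have : (S1.sign p.1 q.1 * Int.sign (∑ i, ζ1 p.1 i * ζ1 q.1 i)) *
        (S2.sign p.2 q.2 * Int.sign (ζ2 p.2 * ζ2 q.2)) = 1 := by
      rw [e1, e2]; norm_num
    linear_combination this

theorem stmt17 [Fintype V1] [Fintype V2] (S1 : SGraph V1) (S2 : SGraph V2)
    (k : ℕ) (ζ1 : V1 → Fin k → ℤ) (h1 : IsPosSwitching S1 k ζ1)
    (ζ2 : V2 → ℤ) (h2a : ∀ v, ζ2 v = 1 ∨ ζ2 v = -1)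
    (h2b : ∀ u v, S2.G.Adj u v → S2.sign u v * Int.sign (ζ2 u * ζ2 v) = 1) :
    IsPosSwitching (tensorProd S1 S2) k (fun p i => ζ2 p.2 * ζ1 p.1 i) ∧
      (S2.Balanced → bdim (tensorProd S1 S2) ≤ bdim S1) := by
  refine ⟨tensor_key S1 S2 k ζ1 h1 ζ2 h2a h2b, ?_⟩
  rintro ⟨ζ, hζ⟩
  -- extract a ±1-valued 1-switching function
  set ζ2' : V2 → ℤ := fun v => if ζ v 0 = 0 then 1 else ζ v 0 with hζ2'
  have h2a' : ∀ v, ζ2' v = 1 ∨ ζ2' v = -1 := by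
    intro v
    rcases hζ.1 v 0 with h | h | h <;> simp [hζ2', h]
  have h2b' : ∀ u v, S2.G.Adj u v → S2.sign u v * Int.sign (ζ2' u * ζ2' v) = 1 := by
    intro u v hadj
    have hs := hζ.2.1 u v hadj
    have hs2 := hζ.2.2 u v hadj
    rw [Fin.sum_univ_one] at hs hs2
    have hu : ζ u 0 ≠ 0 := fun h => hs (by simp [h])
    have hv : ζ v 0 ≠ 0 := fun h => hs (by simp [h])
    simpa [hζ2', hu, hv] using hs2
  -- the set for S1 is nonempty
  have hne : ({k | 1 ≤ k ∧ HasPosSwitching S1 k} : Set ℕ).Nonempty := by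
    rcases Nat.eq_zero_or_pos k with hk | hk
    · -- S1 is edgeless, so the constant 1 works for k = 1
      refine ⟨1, le_refl 1, fun _ _ => 1, ?_, ?_, ?_⟩
      · intro v i; tauto
      · intro u v hadj
        exfalso
        apply h1.2.1 u v hadj
        subst hk
        simp
      · intro u v hadj
        exfalso
        apply h1.2.1 u v hadj
        subst hk
        simp
    · exact ⟨k, hk, ζ1, h1⟩
  have hsub : {k | 1 ≤ k ∧ HasPosSwitching S1 k} ⊆
      {k | 1 ≤ k ∧ HasPosSwitching (tensorProd S1 S2) k} := by
    rintro k' ⟨hk, ζ', hζ'⟩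
    exact ⟨hk, _, tensor_key S1 S2 k' ζ' hζ' ζ2' h2a' h2b'⟩
  have hmem := Nat.sInf_mem hne
  exact Nat.sInf_le (hsub hmem)
end

section
/- If Σ₂ is balanced, then the balancing dimension of the strong product Σ₁ ⊠ Σ₂ equals the balancing dimension of Σ₁. -/
open Finset
open scoped Classical

variable {V V1 V2 W : Type*}

lemma sign_pm_int {e : ℤ} (he : e = 1 ∨ e = -1) : Int.sign e = e := by
  rcases he with h | h <;> simp [h]

lemma strong_to_base [Fintype V1] [Fintype V2] [Nonempty V2] (S1 : SGraph V1) (S2 : SGraph V2)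
    (k : ℕ) (h : HasPosSwitching (strongProd S1 S2) k) : HasPosSwitching S1 k := by
  obtain ⟨ζ, hval, hnz, hsgn⟩ := h
  obtain ⟨b0⟩ := ‹Nonempty V2›
  refine ⟨fun u => ζ (u, b0), fun u i => hval _ i, ?_, ?_⟩
  · intro u v huv
    exact hnz (u, b0) (v, b0) (Or.inl ⟨huv, rfl⟩)
  · intro u v huv
    have h := hsgn (u, b0) (v, b0) (Or.inl ⟨huv, rfl⟩)
    have hs : (strongProd S1 S2).sign (u, b0) (v, b0) = S1.sign u v := by
      show (if u = v then _ else if b0 = b0 then _ else _) = _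
      rw [if_neg huv.ne, if_pos rfl]
    rwa [hs] at h

lemma base_to_strong [Fintype V1] [Fintype V2] (S1 : SGraph V1) (S2 : SGraph V2)
    (h2 : S2.Balanced) (k : ℕ) (hk : 1 ≤ k) (h : HasPosSwitching S1 k) :
    HasPosSwitching (strongProd S1 S2) k := by
  obtain ⟨ζ2, hval2, hnz2, hsgn2⟩ := h2
  obtain ⟨ζ1, hval1, hnz1, hsgn1⟩ := h
  set η : V2 → ℤ := fun a => if ζ2 a 0 = 0 then 1 else ζ2 a 0 with hη
  have hηpm : ∀ a, η a = 1 ∨ η a = -1 := by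
    intro a
    by_cases h0 : ζ2 a 0 = 0
    · left; simp [hη, h0]
    · rcases hval2 a 0 with h | h | h
      · right; simp [hη, h0, h]
      · exact absurd h h0
      · left; simp [hη, h0, h]
  have hηsq : ∀ a, η a * η a = 1 := by
    intro a; rcases hηpm a with h | h <;> simp [h]
  have hηadj : ∀ a b, S2.G.Adj a b → S2.sign a b * (η a * η b) = 1 := by
    intro a b hab
    have hnz := hnz2 a b hab
    have hsgn := hsgn2 a b hab
    rw [Fin.sum_univ_one] at hnz hsgn
    have ha0 : ζ2 a 0 ≠ 0 := fun h => hnz (by simp [h])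
    have hb0 : ζ2 b 0 ≠ 0 := fun h => hnz (by simp [h])
    have hea : η a = ζ2 a 0 := by simp [hη, ha0]
    have heb : η b = ζ2 b 0 := by simp [hη, hb0]
    have hpm : ζ2 a 0 * ζ2 b 0 = 1 ∨ ζ2 a 0 * ζ2 b 0 = -1 := by
      rcases hval2 a 0 with h | h | h <;> rcases hval2 b 0 with h' | h' | h' <;>
        simp_all
    rw [sign_pm_int hpm] at hsgn
    rw [hea, heb]; linarith [hsgn]
  -- modify ζ1 to be nonzero everywhere
  set i0 : Fin k := ⟨0, hk⟩ with hi0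
  set ζ1' : V1 → Fin k → ℤ := fun u i =>
    if ∀ j, ζ1 u j = 0 then (if i = i0 then 1 else 0) else ζ1 u i with hζ1'
  have hval1' : ∀ u i, ζ1' u i = -1 ∨ ζ1' u i = 0 ∨ ζ1' u i = 1 := by
    intro u i
    by_cases h0 : ∀ j, ζ1 u j = 0
    · by_cases hi : i = i0 <;> simp [hζ1', h0, hi]
    · simpa [hζ1', h0] using hval1 u i
  have hagree : ∀ u v, S1.G.Adj u v → ζ1' u = ζ1 u := by
    intro u v huv
    have h0 : ¬ ∀ j, ζ1 u j = 0 := by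
      intro h0
      exact hnz1 u v huv (by simp [h0])
    funext i; simp [hζ1', h0]
  have hpos : ∀ u, 0 < ∑ i, ζ1' u i * ζ1' u i := by
    intro u
    apply Finset.sum_pos'
    · intro i _; exact mul_self_nonneg _
    · by_cases h0 : ∀ j, ζ1 u j = 0
      · refine ⟨i0, Finset.mem_univ _, ?_⟩
        simp [hζ1', h0]
      · push_neg at h0
        obtain ⟨j, hj⟩ := h0
        refine ⟨j, Finset.mem_univ _, ?_⟩
        have h0' : ¬ ∀ j, ζ1 u j = 0 := fun h => hj (h j)
        have : ζ1' u j = ζ1 u j := by simp [hζ1', h0']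
        rw [this]
        rcases hval1 u j with h | h | h <;> simp_all
  refine ⟨fun p i => η p.2 * ζ1' p.1 i, ?_, ?_, ?_⟩
  · intro p i
    rcases hηpm p.2 with h | h <;> rcases hval1' p.1 i with h' | h' | h' <;>
      simp [h, h']
  all_goals {
    rintro ⟨u, a⟩ ⟨v, b⟩ hadj
    have hsum : ∑ i, (η a * ζ1' u i) * (η b * ζ1' v i)
        = (η a * η b) * ∑ i, ζ1' u i * ζ1' v i := by
      rw [Finset.mul_sum]; exact Finset.sum_congr rfl (fun i _ => by ring)
    have hepm : η a * η b = 1 ∨ η a * η b = -1 := by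
      rcases hηpm a with h | h <;> rcases hηpm b with h' | h' <;> simp [h, h']
    have hene : η a * η b ≠ 0 := by rcases hepm with h | h <;> simp [h]
    rcases hadj with ⟨h1, h2⟩ | ⟨h1, h2⟩ | ⟨h1, h2⟩
    · -- u ~ v, a = b
      subst h2
      have hee : η a * η a = 1 := hηsq a
      rw [hsum, hagree u v h1, hagree v u h1.symm, hee, one_mul]
      first
      | exact hnz1 u v h1
      | { have hs : (strongProd S1 S2).sign (u, a) (v, a) = S1.sign u v := by
            show (if u = v then _ else if a = a then _ else _) = _
            rw [if_neg h1.ne, if_pos rfl]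
          rw [hs]; exact hsgn1 u v h1 }
    · -- u = v, a ~ b
      subst h1
      rw [hsum]
      first
      | exact mul_ne_zero hene (hpos u).ne'
      | { have hs : (strongProd S1 S2).sign (u, a) (u, b) = S2.sign a b := by
            show (if u = u then _ else _) = _
            rw [if_pos rfl]
          rw [hs, Int.sign_mul, sign_pm_int hepm,
            Int.sign_eq_one_of_pos (hpos u), mul_one]
          exact hηadj a b h2 }
    · -- u ~ v, a ~ b
      rw [hsum, hagree u v h1, hagree v u h1.symm]
      first
      | exact mul_ne_zero hene (hnz1 u v h1)
      | { have hs : (strongProd S1 S2).sign (u, a) (v, b) = S1.sign u v * S2.sign a b := by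
            show (if u = v then _ else if a = b then _ else _) = _
            rw [if_neg h1.ne, if_neg h2.ne]
          rw [hs, Int.sign_mul, sign_pm_int hepm]
          have e1 := hsgn1 u v h1
          have e2 := hηadj a b h2
          nlinarith [e1, e2] }
  }

theorem stmt19 [Fintype V1] [Fintype V2] [Nonempty V2] (S1 : SGraph V1) (S2 : SGraph V2)
    (h2 : S2.Balanced) : bdim (strongProd S1 S2) = bdim S1 := by
  unfold bdim
  congr 1
  ext k
  simp only [Set.mem_setOf_eq]
  constructor
  · rintro ⟨hk, h⟩
    exact ⟨hk, strong_to_base S1 S2 k h⟩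
  · rintro ⟨hk, h⟩
    exact ⟨hk, base_to_strong S1 S2 h2 k hk h⟩
end
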